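/- For any M, s > 0, any depth L and width vector p: every ReLU network in F_M(L,p,s) (at most s nonzero weights, all weights in [−M,M]) is equal, as a function on [0,1]^d, to a modified ReLU network in G₂(L,p,s(M+1)²), i.e. F_M(L,p,s) ⊂ G₂(L,p,s(M+1)²). -/
import Mathlib


open MeasureTheory ProbabilityTheory Finset
open scoped BigOperators Classical Pointwise

noncomputable section

/-- The ReLU activation function. -/
def relu (x : ℝ) : ℝ := max 0 x

/-- The modifier function `α` from the paper. -/
def alphaFn (x : ℝ) : ℝ := if x < -1 then x + 1 else if x ≤ 1 then 0 else x - 1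

/-- The unit cube `[0,1]^d`. -/
def cube (d : ℕ) : Set (Fin d → ℝ) := Set.Icc 0 1

/-- Collections of weight matrices for a network with width function `p`. -/
abbrev NetWeights (p : ℕ → ℕ) : Type :=
  (i : ℕ) → Matrix (Fin (p (i + 1))) (Fin (p i)) ℝ

/-- Hidden layer computations of a feedforward ReLU network. -/
def hiddenLayers (p : ℕ → ℕ) (W : NetWeights p) (x : Fin (p 0) → ℝ) :
    (k : ℕ) → Fin (p k) → ℝ
  | 0 => x
  | k + 1 => fun j => relu ((W k).mulVec (hiddenLayers p W x k) j)

/-- An ordinary feedforward ReLU network of depth `L` (real-valued output;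
the output width `p (L+1)` is assumed to be `1`, and the output is read off
by summing the coordinates of the last layer). -/
def reluNet (L : ℕ) (p : ℕ → ℕ) (W : NetWeights p) (x : Fin (p 0) → ℝ) : ℝ :=
  ∑ j, (W L).mulVec (hiddenLayers p W x L) j

/-- Apply the modifier `α` entrywise to the hidden weight matrices. -/
def modifyWeights (L : ℕ) (p : ℕ → ℕ) (V : NetWeights p) : NetWeights p :=
  fun i => if i < L then (V i).map alphaFn else V i

/-- A modified ReLU network. -/
def modNet (L : ℕ) (p : ℕ → ℕ) (V : NetWeights p) (x : Fin (p 0) → ℝ) : ℝ :=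
  reluNet L p (modifyWeights L p V) x

/-- `l₁` norm of a matrix: sum of absolute values of all entries. -/
def matL1 {m k : ℕ} (W : Matrix (Fin m) (Fin k) ℝ) : ℝ := ∑ i, ∑ j, |W i j|

/-- Squared Frobenius norm of a matrix. -/
def matL2sq {m k : ℕ} (W : Matrix (Fin m) (Fin k) ℝ) : ℝ := ∑ i, ∑ j, (W i j) ^ 2

/-- Number of nonzero entries of a matrix. -/
def matNNZ {m k : ℕ} (W : Matrix (Fin m) (Fin k) ℝ) : ℕ :=
  (Finset.univ.filter fun ij : Fin m × Fin k => W ij.1 ij.2 ≠ 0).card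

def weightsL1 (L : ℕ) (p : ℕ → ℕ) (W : NetWeights p) : ℝ :=
  ∑ i ∈ Finset.range (L + 1), matL1 (W i)

def weightsL2sq (L : ℕ) (p : ℕ → ℕ) (W : NetWeights p) : ℝ :=
  ∑ i ∈ Finset.range (L + 1), matL2sq (W i)

def weightsNNZ (L : ℕ) (p : ℕ → ℕ) (W : NetWeights p) : ℕ :=
  ∑ i ∈ Finset.range (L + 1), matNNZ (W i)

def weightsBounded (L : ℕ) (p : ℕ → ℕ) (M : ℝ) (W : NetWeights p) : Prop :=
  ∀ i ≤ L, ∀ j k, |W i j k| ≤ M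

/-- `|p|_∞ = max {p_0, ..., p_L}`. -/
def pMax (L : ℕ) (p : ℕ → ℕ) : ℕ := (Finset.range (L + 1)).sup p

/-- The class `F_M(L,p,s)`: ReLU networks with at most `s` nonzero weights,
all contained in `[-M, M]`, viewed as functions on `[0,1]^d`. -/
def sparseReluClass (L : ℕ) (p : ℕ → ℕ) (M s : ℝ) : Set ((Fin (p 0) → ℝ) → ℝ) :=
  {f | ∃ W : NetWeights p, (∀ x ∈ cube (p 0), f x = reluNet L p W x) ∧
        (weightsNNZ L p W : ℝ) ≤ s ∧ weightsBounded L p M W}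

/-- The class `F̃(L,p,r)`: ReLU networks with total `l₁` weight norm at most `r`. -/
def l1ReluClass (L : ℕ) (p : ℕ → ℕ) (r : ℝ) : Set ((Fin (p 0) → ℝ) → ℝ) :=
  {f | ∃ W : NetWeights p, (∀ x ∈ cube (p 0), f x = reluNet L p W x) ∧ weightsL1 L p W ≤ r}

/-- The class `G₁(L,p,r)`: modified ReLU networks with total `l₁` weight norm at most `r`. -/
def modClassL1 (L : ℕ) (p : ℕ → ℕ) (r : ℝ) : Set ((Fin (p 0) → ℝ) → ℝ) :=
  {g | ∃ V : NetWeights p, (∀ x ∈ cube (p 0), g x = modNet L p V x) ∧ weightsL1 L p V ≤ r}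

/-- The class `G₂(L,p,r)`: modified ReLU networks with total squared `l₂` weight norm at most `r`. -/
def modClassL2 (L : ℕ) (p : ℕ → ℕ) (r : ℝ) : Set ((Fin (p 0) → ℝ) → ℝ) :=
  {g | ∃ V : NetWeights p, (∀ x ∈ cube (p 0), g x = modNet L p V x) ∧ weightsL2sq L p V ≤ r}

/-- Partial derivative in coordinate direction `i`. -/
def pderivAlong {d : ℕ} (i : Fin d) (f : (Fin d → ℝ) → ℝ) : (Fin d → ℝ) → ℝ :=
  fun x => fderiv ℝ f x (Pi.single i 1)

/-- Multi-index partial derivative `∂^γ`. -/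
def multiPderiv {d : ℕ} (γ : Fin d → ℕ) (f : (Fin d → ℝ) → ℝ) : (Fin d → ℝ) → ℝ :=
  (List.finRange d).foldr (fun i h => (pderivAlong i)^[γ i] h) f

/-- Degree `|γ|` of a multi-index. -/
def degree {d : ℕ} (γ : Fin d → ℕ) : ℕ := ∑ i, γ i

/-- `|x - y|_∞`. -/
def supDist {d : ℕ} (x y : Fin d → ℝ) : ℝ := ⨆ i, |x i - y i|

/-- The Hölder ball `C^β_d(F)`. -/
def holderBall (d : ℕ) (β F : ℝ) : Set ((Fin d → ℝ) → ℝ) :=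
  {g | ContDiff ℝ (⌊β⌋₊ : ℕ∞) g ∧
    ∃ b h : (Fin d → ℕ) → ℝ,
      (∀ γ : Fin d → ℕ, (degree γ : ℝ) < β → ∀ x ∈ cube d, |multiPderiv γ g x| ≤ b γ) ∧
      (∀ γ : Fin d → ℕ, degree γ = ⌊β⌋₊ → ∀ x ∈ cube d, ∀ y ∈ cube d, x ≠ y →
        |multiPderiv γ g x - multiPderiv γ g y| ≤ h γ * supDist x y ^ (β - (⌊β⌋₊ : ℝ))) ∧
      (∑ᶠ (γ : Fin d → ℕ) (_ : (degree γ : ℝ) < β), b γ) +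
        (∑ᶠ (γ : Fin d → ℕ) (_ : degree γ = ⌊β⌋₊), h γ) ≤ F}

/-- `isCoverOfSize δ F N` : there is a `δ`-cover (in sup distance on `[0,1]^d`)
of the function class `F` of cardinality `N`. -/
def isCoverOfSize {d : ℕ} (δ : ℝ) (F : Set ((Fin d → ℝ) → ℝ)) (N : ℕ) : Prop :=
  ∃ fs : Fin N → (Fin d → ℝ) → ℝ, ∀ f ∈ F, ∃ k, ∀ x ∈ cube d, |f x - fs k x| ≤ δ

/-- `⌈log₂ x⌉` as a natural number. -/
def ceilLog2 (x : ℝ) : ℕ := (⌈Real.logb 2 x⌉).toNat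

/-- The width vector `(d, w, ..., w, 1)` of a network of depth `L`. -/
def widthVec (d w L : ℕ) : ℕ → ℕ
  | 0 => d
  | i + 1 => if i + 1 ≤ L then w else 1

/-- The depth `L_n = 8 + (⌈log₂ n⌉ + 5)(1 + ⌈log₂ (d ∨ β)⌉)`. -/
def Ln (d : ℕ) (β : ℝ) (n : ℕ) : ℕ :=
  8 + (Nat.clog 2 n + 5) * (1 + ceilLog2 (max (d : ℝ) β))

/-- `N_n = ⌈n^{d/(2β+d)}⌉`. -/
def Nn (d : ℕ) (β : ℝ) (n : ℕ) : ℕ := ⌈(n : ℝ) ^ ((d : ℝ) / (2 * β + d))⌉₊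

/-- The hidden width `6(d + ⌈β⌉) N_n`. -/
def wn (d : ℕ) (β : ℝ) (n : ℕ) : ℕ := 6 * (d + ⌈β⌉₊) * Nn d β n

/-- The width vector `p_n = (d, 6(d+⌈β⌉)⌈n^{d/(2β+d)}⌉, ..., 6(d+⌈β⌉)⌈n^{d/(2β+d)}⌉, 1)`. -/
def pn (d : ℕ) (β : ℝ) (n : ℕ) : ℕ → ℕ := widthVec d (wn d β n) (Ln d β n)

end

noncomputable def shiftFn (w : ℝ) : ℝ := if 0 < w then w + 1 else if w < 0 then w - 1 else 0

lemma alphaFn_shiftFn (w : ℝ) : alphaFn (shiftFn w) = w := by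
  unfold alphaFn shiftFn
  split_ifs <;> linarith

lemma shiftFn_zero : shiftFn 0 = 0 := by simp [shiftFn]

lemma shiftFn_abs_le (w M : ℝ) (hw : |w| ≤ M) : |shiftFn w| ≤ M + 1 := by
  rw [abs_le] at hw ⊢
  unfold shiftFn
  split_ifs <;> constructor <;> linarith

lemma matL2sq_le_of {m k : ℕ} (A B : Matrix (Fin m) (Fin k) ℝ) (C : ℝ)
    (h0 : ∀ j l, B j l = 0 → A j l = 0) (hb : ∀ j l, |A j l| ≤ C) :
    matL2sq A ≤ C ^ 2 * matNNZ B := by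
  unfold matL2sq matNNZ
  have hprod : (∑ i, ∑ j, A i j ^ 2) = ∑ ij : Fin m × Fin k, (A ij.1 ij.2) ^ 2 :=
    (Fintype.sum_prod_type (f := fun ij : Fin m × Fin k => (A ij.1 ij.2) ^ 2)).symm
  rw [hprod]
  have hfilter : ∑ ij : Fin m × Fin k, (A ij.1 ij.2) ^ 2
      = ∑ ij ∈ Finset.univ.filter (fun ij : Fin m × Fin k => B ij.1 ij.2 ≠ 0),
        (A ij.1 ij.2) ^ 2 := by
    refine (Finset.sum_filter_of_ne ?_).symm
    intro ij _ hne hB0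
    exact hne (by rw [h0 ij.1 ij.2 hB0]; ring)
  rw [hfilter]
  calc ∑ ij ∈ Finset.univ.filter (fun ij : Fin m × Fin k => B ij.1 ij.2 ≠ 0),
        (A ij.1 ij.2) ^ 2
      ≤ ∑ _ij ∈ Finset.univ.filter (fun ij : Fin m × Fin k => B ij.1 ij.2 ≠ 0), C ^ 2 := by
        refine Finset.sum_le_sum fun ij _ => ?_
        calc (A ij.1 ij.2) ^ 2 = |A ij.1 ij.2| ^ 2 := (sq_abs _).symm
          _ ≤ C ^ 2 := pow_le_pow_left₀ (abs_nonneg _) (hb ij.1 ij.2) 2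
    _ = C ^ 2 * (Finset.univ.filter (fun ij : Fin m × Fin k => B ij.1 ij.2 ≠ 0)).card := by
        rw [Finset.sum_const, nsmul_eq_mul, mul_comm]

/-- `F_M(L,p,s) ⊆ G₂(L,p,s(M+1)²)`. -/
theorem sparse_subset_modL2 (L : ℕ) (p : ℕ → ℕ) (hp : p (L + 1) = 1)
    (M s : ℝ) (hM : 0 < M) (hs : 0 < s) :
    sparseReluClass L p M s ⊆ modClassL2 L p (s * (M + 1) ^ 2) := by
  rintro f ⟨W, hfW, hNNZ, hbd⟩
  refine ⟨fun i => if i < L then (W i).map shiftFn else W i, ?_, ?_⟩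
  · intro x hx
    rw [hfW x hx]
    unfold modNet
    have hmod : modifyWeights L p (fun i => if i < L then (W i).map shiftFn else W i) = W := by
      funext i
      unfold modifyWeights
      by_cases h : i < L
      · simp only [h, if_true]
        ext j k
        simp [Matrix.map_apply, alphaFn_shiftFn]
      · simp only [h, if_false]
    rw [hmod]
  · unfold weightsL2sq
    have hle : ∀ i ∈ Finset.range (L + 1),
        matL2sq (if i < L then (W i).map shiftFn else W i) ≤ (M + 1) ^ 2 * matNNZ (W i) := by
      intro i hi
      have hiL : i ≤ L := Nat.lt_succ_iff.mp (Finset.mem_range.mp hi)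
      by_cases h : i < L
      · simp only [h, if_true]
        refine matL2sq_le_of _ _ _ ?_ ?_
        · intro j l hB0
          simp [Matrix.map_apply, hB0, shiftFn_zero]
        · intro j l
          simp only [Matrix.map_apply]
          exact shiftFn_abs_le _ _ (hbd i hiL j l)
      · simp only [h, if_false]
        refine matL2sq_le_of _ _ _ (fun j l h => h) fun j l => ?_
        linarith [hbd i hiL j l]
    calc ∑ i ∈ Finset.range (L + 1), matL2sq (if i < L then (W i).map shiftFn else W i)
        ≤ ∑ i ∈ Finset.range (L + 1), (M + 1) ^ 2 * matNNZ (W i) :=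
          Finset.sum_le_sum hle
      _ = (M + 1) ^ 2 * (weightsNNZ L p W : ℝ) := by
          rw [← Finset.mul_sum]
          unfold weightsNNZ
          push_cast
          ring
      _ ≤ (M + 1) ^ 2 * s := by
          refine mul_le_mul_of_nonneg_left hNNZ (by positivity)
      _ = s * (M + 1) ^ 2 := by ring
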